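/- Let T be a real random variable with E[T²] < ∞ that is not almost surely constant. Then the 2×2 matrix C = E[(1/(1+T²)) · [[T², T],[T, 1]]] is symmetric positive definite. -/

import Mathlib

open MeasureTheory

theorem stmt_4 {Ω : Type*} [MeasurableSpace Ω] (μ : Measure Ω) [IsProbabilityMeasure μ]
    (T : Ω → ℝ) (hmeas : Measurable T)
    (hL2 : Integrable (fun ω => T ω ^ 2) μ)
    (hnondeg : ¬ ∃ c : ℝ, T =ᵐ[μ] fun _ => c) :
    (!![∫ ω, T ω ^ 2 / (1 + T ω ^ 2) ∂μ, ∫ ω, T ω / (1 + T ω ^ 2) ∂μ;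
        ∫ ω, T ω / (1 + T ω ^ 2) ∂μ, ∫ ω, 1 / (1 + T ω ^ 2) ∂μ] :
      Matrix (Fin 2) (Fin 2) ℝ).PosDef := by
  have hden : ∀ ω, (0:ℝ) < 1 + T ω ^ 2 := fun ω => by positivity
  have hmden : Measurable fun ω => 1 + T ω ^ 2 :=
    measurable_const.add (hmeas.pow_const 2)
  have key : ∀ g : Ω → ℝ, Measurable g → (∀ ω, |g ω| ≤ 1) → Integrable g μ := by
    intro g hg hbd
    exact (integrable_const (1:ℝ)).mono' hg.aestronglyMeasurable
      (Filter.Eventually.of_forall fun ω => by simpa using hbd ω)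
  have ha : Integrable (fun ω => T ω ^ 2 / (1 + T ω ^ 2)) μ := by
    refine key _ ((hmeas.pow_const 2).div hmden) fun ω => ?_
    rw [abs_div, abs_of_nonneg (sq_nonneg _), abs_of_pos (hden ω),
      div_le_one (hden ω)]
    nlinarith [sq_nonneg (T ω)]
  have hb : Integrable (fun ω => T ω / (1 + T ω ^ 2)) μ := by
    refine key _ (hmeas.div hmden) fun ω => ?_
    rw [abs_div, abs_of_pos (hden ω), div_le_one (hden ω)]
    nlinarith [sq_nonneg (|T ω| - 1), sq_abs (T ω), abs_nonneg (T ω)]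
  have hc : Integrable (fun ω => 1 / (1 + T ω ^ 2)) μ := by
    refine key _ (measurable_const.div hmden) fun ω => ?_
    rw [abs_div, abs_of_pos (hden ω), abs_one, div_le_one (hden ω)]
    nlinarith [sq_nonneg (T ω)]
  refine ⟨?_, fun x hx => ?_⟩
  · refine Matrix.IsHermitian.ext fun i j => ?_
    fin_cases i <;> fin_cases j <;> simp
  · have hQ : ∀ x0 x1 : ℝ,
        ∫ ω, (x0 * T ω + x1) ^ 2 / (1 + T ω ^ 2) ∂μ =
        x0 * x0 * ∫ ω, T ω ^ 2 / (1 + T ω ^ 2) ∂μ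
        + (x0 * x1 * ∫ ω, T ω / (1 + T ω ^ 2) ∂μ
        + (x1 * x0 * ∫ ω, T ω / (1 + T ω ^ 2) ∂μ
        + x1 * x1 * ∫ ω, 1 / (1 + T ω ^ 2) ∂μ)) := by
      intro x0 x1
      have heq : (fun ω => (x0 * T ω + x1) ^ 2 / (1 + T ω ^ 2)) =
          fun ω => x0 * x0 * (T ω ^ 2 / (1 + T ω ^ 2))
          + (x0 * x1 * (T ω / (1 + T ω ^ 2))
          + (x1 * x0 * (T ω / (1 + T ω ^ 2))
          + x1 * x1 * (1 / (1 + T ω ^ 2)))) := by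
        funext ω
        have := (hden ω).ne'
        field_simp
        ring
      have H3 : Integrable (fun ω => x1 * x0 * (T ω / (1 + T ω ^ 2))
          + x1 * x1 * (1 / (1 + T ω ^ 2))) μ := (hb.const_mul _).add (hc.const_mul _)
      have H2 : Integrable (fun ω => x0 * x1 * (T ω / (1 + T ω ^ 2))
          + (x1 * x0 * (T ω / (1 + T ω ^ 2)) + x1 * x1 * (1 / (1 + T ω ^ 2)))) μ :=
        (hb.const_mul _).add H3
      rw [heq, integral_add (ha.const_mul _) H2,
          integral_add (hb.const_mul _) H3,
          integral_add (hb.const_mul _) (hc.const_mul _)]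
      simp only [integral_const_mul]
    set x0 := x 0 with hx0
    set x1 := x 1 with hx1
    have hInt : Integrable (fun ω => (x0 * T ω + x1) ^ 2 / (1 + T ω ^ 2)) μ := by
      have heq : (fun ω => (x0 * T ω + x1) ^ 2 / (1 + T ω ^ 2)) =
          fun ω => x0 * x0 * (T ω ^ 2 / (1 + T ω ^ 2))
          + (x0 * x1 * (T ω / (1 + T ω ^ 2))
          + (x1 * x0 * (T ω / (1 + T ω ^ 2))
          + x1 * x1 * (1 / (1 + T ω ^ 2)))) := by
        funext ω
        have := (hden ω).ne'
        field_simp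
        ring
      rw [heq]
      exact (ha.const_mul _).add ((hb.const_mul _).add
        ((hb.const_mul _).add (hc.const_mul _)))
    have hnonneg : 0 ≤ ∫ ω, (x0 * T ω + x1) ^ 2 / (1 + T ω ^ 2) ∂μ :=
      integral_nonneg fun ω => div_nonneg (sq_nonneg _) (hden ω).le
    have hne : (∫ ω, (x0 * T ω + x1) ^ 2 / (1 + T ω ^ 2) ∂μ) ≠ 0 := by
      intro h0
      have hae : (fun ω => (x0 * T ω + x1) ^ 2 / (1 + T ω ^ 2)) =ᵐ[μ] 0 := by
        rw [← integral_eq_zero_iff_of_nonneg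
          (fun ω => div_nonneg (sq_nonneg _) (hden ω).le) hInt]
        exact h0
      have hzero : ∀ᵐ ω ∂μ, x0 * T ω + x1 = 0 := by
        filter_upwards [hae] with ω hω
        have h1 : (x0 * T ω + x1) ^ 2 / (1 + T ω ^ 2) = 0 := hω
        have h2 : (x0 * T ω + x1) ^ 2 = 0 := by
          rcases div_eq_zero_iff.mp h1 with h | h
          · exact h
          · exact absurd h (hden ω).ne'
        exact pow_eq_zero_iff (by norm_num : (2:ℕ) ≠ 0) |>.mp h2
      by_cases h0' : x0 = 0
      · have hx1z : x1 = 0 := by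
          have : ∀ᵐ ω ∂μ, x1 = 0 := by
            filter_upwards [hzero] with ω hω
            simpa [h0'] using hω
          obtain ⟨ω, hω⟩ := this.exists
          exact hω
        apply hx
        ext i
        fin_cases i
        · simpa [← hx0] using h0'
        · simpa [← hx1] using hx1z
      · apply hnondeg
        refine ⟨-x1 / x0, ?_⟩
        filter_upwards [hzero] with ω hω
        field_simp
        linarith
    have hpos : 0 < ∫ ω, (x0 * T ω + x1) ^ 2 / (1 + T ω ^ 2) ∂μ :=
      lt_of_le_of_ne hnonneg (Ne.symm hne)
    rw [hQ] at hpos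
    simp only [Matrix.mulVec, dotProduct, Finsupp.sum_fintype, mul_zero, zero_mul,
      add_zero, Finsupp.sum_fun_zero, implies_true, Fin.sum_univ_two,
      Matrix.of_apply, Matrix.cons_val', Matrix.cons_val_zero, Matrix.cons_val_one,
      Matrix.head_cons, Matrix.empty_val', Matrix.cons_val_fin_one,
      Matrix.head_fin_const, star_trivial, RCLike.re_to_real]
    nlinarith [hpos]
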